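/- Let t11 ≤ min(t12,t21) ≤ max(t12,t21) ≤ t22 be nonnegative reals and c(t) = h(t−t11) − h(t−t12) − h(t−t21) + h(t−t22). Then for every u > t22 and every t ≥ 0, the integral ∫_t^u c(τ) dτ ≤ 0 for all t if and only if −t11 + t12 + t21 − t22 ≤ 0. -/

import Mathlib

noncomputable def heaviside (x : ℝ) : ℝ := if 0 ≤ x then 1 else 0

lemma heaviside_mono (a : ℝ) : Monotone (fun τ : ℝ => heaviside (τ - a)) := by
  intro x y hxy
  simp only [heaviside]
  split_ifs with hx hy <;> norm_num <;> linarith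

lemma heaviside_intInt (a t u : ℝ) :
    IntervalIntegrable (fun τ => heaviside (τ - a)) MeasureTheory.volume t u :=
  (heaviside_mono a).intervalIntegrable

lemma heaviside_integral_le (a t u : ℝ) (h : t ≤ u) :
    ∫ τ in t..u, heaviside (τ - a) = max (u - a) 0 - max (t - a) 0 := by
  rw [intervalIntegral.integral_of_le h]
  have hrw : ∀ τ : ℝ, heaviside (τ - a) = Set.indicator (Set.Ici a) (fun _ => (1:ℝ)) τ := by
    intro τ; simp [heaviside, Set.indicator, Set.mem_Ici, sub_nonneg]
  simp_rw [hrw]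
  rw [MeasureTheory.setIntegral_indicator measurableSet_Ici,
    MeasureTheory.setIntegral_const]
  rcases le_or_gt a t with hat | hat
  · have hs : Set.Ioc t u ∩ Set.Ici a = Set.Ioc t u := by
      ext x
      simp only [Set.mem_inter_iff, Set.mem_Ioc, Set.mem_Ici, and_iff_left_iff_imp]
      rintro ⟨hx, _⟩; linarith
    rw [hs, Real.volume_real_Ioc_of_le h]
    rw [max_eq_left (by linarith), max_eq_left (by linarith)]
    ring_nf
  · have hs : Set.Ioc t u ∩ Set.Ici a = Set.Icc a u := by
      ext x
      simp only [Set.mem_inter_iff, Set.mem_Ioc, Set.mem_Icc, Set.mem_Ici]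
      constructor
      · rintro ⟨⟨_, hxu⟩, hxa⟩; exact ⟨hxa, hxu⟩
      · rintro ⟨hxa, hxu⟩; exact ⟨⟨by linarith, hxu⟩, hxa⟩
    rw [hs, Real.volume_real_Icc]
    rw [max_eq_right (by linarith : t - a ≤ 0)]
    simp

lemma heaviside_integral (a t u : ℝ) :
    ∫ τ in t..u, heaviside (τ - a) = max (u - a) 0 - max (t - a) 0 := by
  rcases le_total t u with h | h
  · exact heaviside_integral_le a t u h
  · rw [intervalIntegral.integral_symm, heaviside_integral_le a u t h]
    ring

theorem stmt4 (t11 t12 t21 t22 : ℝ)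
    (h0 : 0 ≤ t11) (h1 : t11 ≤ min t12 t21) (h2 : max t12 t21 ≤ t22)
    (c : ℝ → ℝ)
    (hc : ∀ t, c t = heaviside (t - t11) - heaviside (t - t12)
        - heaviside (t - t21) + heaviside (t - t22)) :
    (∀ u, t22 < u → ∀ t, 0 ≤ t → (∫ τ in t..u, c τ) ≤ 0) ↔
      -t11 + t12 + t21 - t22 ≤ 0 := by
  have ha : t11 ≤ t12 := le_trans h1 (min_le_left _ _)
  have hb : t11 ≤ t21 := le_trans h1 (min_le_right _ _)
  have hc12 : t12 ≤ t22 := le_trans (le_max_left _ _) h2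
  have hc21 : t21 ≤ t22 := le_trans (le_max_right _ _) h2
  have key : ∀ t u : ℝ, (∫ τ in t..u, c τ) =
      (max (u - t11) 0 - max (t - t11) 0) - (max (u - t12) 0 - max (t - t12) 0)
      - (max (u - t21) 0 - max (t - t21) 0) + (max (u - t22) 0 - max (t - t22) 0) := by
    intro t u
    have e : (fun τ => c τ) = fun τ => heaviside (τ - t11) - heaviside (τ - t12)
        - heaviside (τ - t21) + heaviside (τ - t22) := funext hc
    rw [show (∫ τ in t..u, c τ) = ∫ τ in t..u, (heaviside (τ - t11) - heaviside (τ - t12)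
        - heaviside (τ - t21) + heaviside (τ - t22)) from by rw [e]]
    rw [intervalIntegral.integral_add (((heaviside_intInt t11 t u).sub
        (heaviside_intInt t12 t u)).sub (heaviside_intInt t21 t u)) (heaviside_intInt t22 t u),
      intervalIntegral.integral_sub ((heaviside_intInt t11 t u).sub
        (heaviside_intInt t12 t u)) (heaviside_intInt t21 t u),
      intervalIntegral.integral_sub (heaviside_intInt t11 t u) (heaviside_intInt t12 t u),
      heaviside_integral, heaviside_integral, heaviside_integral, heaviside_integral]
  constructor
  · intro H
    have := H (t22 + 1) (by linarith) 0 le_rfl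
    rw [key] at this
    rw [show max (t22 + 1 - t11) 0 = t22 + 1 - t11 from max_eq_left (by linarith),
      show max (t22 + 1 - t12) 0 = t22 + 1 - t12 from max_eq_left (by linarith),
      show max (t22 + 1 - t21) 0 = t22 + 1 - t21 from max_eq_left (by linarith),
      show max (t22 + 1 - t22) 0 = t22 + 1 - t22 from max_eq_left (by linarith),
      show max ((0:ℝ) - t11) 0 = 0 from max_eq_right (by linarith),
      show max ((0:ℝ) - t12) 0 = 0 from max_eq_right (by linarith),
      show max ((0:ℝ) - t21) 0 = 0 from max_eq_right (by linarith),
      show max ((0:ℝ) - t22) 0 = 0 from max_eq_right (by linarith)] at this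
    linarith
  · intro hS u hu t ht
    rw [key]
    rw [max_eq_left (by linarith : (0:ℝ) ≤ u - t11), max_eq_left (by linarith : (0:ℝ) ≤ u - t12),
      max_eq_left (by linarith : (0:ℝ) ≤ u - t21), max_eq_left (by linarith : (0:ℝ) ≤ u - t22)]
    rcases max_cases (t - t11) 0 with ⟨e1, l1⟩ | ⟨e1, l1⟩ <;>
      rcases max_cases (t - t12) 0 with ⟨e2, l2⟩ | ⟨e2, l2⟩ <;>
      rcases max_cases (t - t21) 0 with ⟨e3, l3⟩ | ⟨e3, l3⟩ <;>
      rcases max_cases (t - t22) 0 with ⟨e4, l4⟩ | ⟨e4, l4⟩ <;>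
      rw [e1, e2, e3, e4] <;> linarith
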